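/- The group with presentation ⟨x₂, x₄, s, t ∣ tx₄x₂ = 1, x₂x₄t⁻¹x₂st = 1, x₂x₄²t⁻¹ = 1⟩ is isomorphic to the group with presentation ⟨a, b ∣ a²b³ = 1⟩, via an isomorphism sending x₂ ↦ a and x₄ ↦ b. -/

import Mathlib

/-- The four generators `x₂`, `x₄`, `s`, `t` of the first group. -/
inductive GenMW : Type
  | x₂ | x₄ | s | t

/-- The two generators `a`, `b` of `⟨a, b ∣ a²b³ = 1⟩`. -/
inductive GenT : Type
  | a | b

/-- Relators `tx₄x₂`, `x₂x₄t⁻¹x₂st`, `x₂x₄²t⁻¹` of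
`⟨x₂, x₄, s, t ∣ tx₄x₂ = 1, x₂x₄t⁻¹x₂st = 1, x₂x₄²t⁻¹ = 1⟩`. -/
def relsMW : Set (FreeGroup GenMW) :=
  { FreeGroup.of GenMW.t * FreeGroup.of GenMW.x₄ * FreeGroup.of GenMW.x₂,
    FreeGroup.of GenMW.x₂ * FreeGroup.of GenMW.x₄ * (FreeGroup.of GenMW.t)⁻¹ *
      FreeGroup.of GenMW.x₂ * FreeGroup.of GenMW.s * FreeGroup.of GenMW.t,
    FreeGroup.of GenMW.x₂ * (FreeGroup.of GenMW.x₄) ^ 2 * (FreeGroup.of GenMW.t)⁻¹ }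

/-- The single relator `a²b³` of `⟨a, b ∣ a²b³ = 1⟩`. -/
def relsT : Set (FreeGroup GenT) :=
  { (FreeGroup.of GenT.a) ^ 2 * (FreeGroup.of GenT.b) ^ 3 }

section Aux

/-- A relator maps to 1 in the presented group. -/
lemma presented_rel_one {α : Type*} {rels : Set (FreeGroup α)} {r : FreeGroup α}
    (hr : r ∈ rels) : PresentedGroup.mk rels r = 1 :=
  (QuotientGroup.eq_one_iff _).mpr (Subgroup.subset_normalClosure hr)

open PresentedGroup GenMW GenT

/-- Relation `a²b³ = 1` in the target group. -/
lemma relT_holds : (of a : PresentedGroup relsT) ^ 2 * of b ^ 3 = 1 := by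
  have := presented_rel_one (rels := relsT) rfl
  simpa [PresentedGroup.of] using this

lemma relMW1 : (of t : PresentedGroup relsMW) * of x₄ * of x₂ = 1 := by
  have := presented_rel_one (rels := relsMW) (Set.mem_insert _ _)
  simpa [PresentedGroup.of] using this

lemma relMW2 : (of x₂ : PresentedGroup relsMW) * of x₄ * (of t)⁻¹ * of x₂ * of s * of t = 1 := by
  have := presented_rel_one (rels := relsMW)
    (Set.mem_insert_of_mem _ (Set.mem_insert _ _))
  simpa [PresentedGroup.of] using this

lemma relMW3 : (of x₂ : PresentedGroup relsMW) * of x₄ ^ 2 * (of t)⁻¹ = 1 := by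
  have := presented_rel_one (rels := relsMW)
    (Set.mem_insert_of_mem _ (Set.mem_insert_of_mem _ rfl))
  simpa [PresentedGroup.of] using this

/-- The map on generators from MW to T. -/
def fMW : GenMW → PresentedGroup relsT
  | .x₂ => of a
  | .x₄ => of b
  | .t => (of a)⁻¹ * (of b)⁻¹
  | .s => (of a)⁻¹ * ((of a)⁻¹ * (of b)⁻¹) * (of b)⁻¹ * (of a)⁻¹ * ((of a)⁻¹ * (of b)⁻¹)⁻¹

lemma hfMW : ∀ r ∈ relsMW, FreeGroup.lift fMW r = 1 := by
  have hb3 : (of b : PresentedGroup relsT) ^ 3 = ((of a) ^ 2)⁻¹ := by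
    have h := relT_holds
    calc (of b : PresentedGroup relsT) ^ 3
        = ((of a) ^ 2)⁻¹ * (of a ^ 2 * of b ^ 3) := by group
      _ = ((of a) ^ 2)⁻¹ := by rw [h]; group
  rintro r (rfl | rfl | rfl) <;>
    simp only [map_mul, map_inv, map_pow, FreeGroup.lift_apply_of, fMW]
  · group
  · group
  · -- a * b^2 * (b * a) = a * b^3 * a = 1
    have : (of a : PresentedGroup relsT) * of b ^ 2 * ((of a)⁻¹ * (of b)⁻¹)⁻¹
        = of a * of b ^ 3 * of a := by group
    rw [this, hb3]; group

/-- The map on generators from T to MW. -/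
def gT : GenT → PresentedGroup relsMW
  | .a => of x₂
  | .b => of x₄

lemma hgT : ∀ r ∈ relsT, FreeGroup.lift gT r = 1 := by
  rintro r rfl
  simp only [map_mul, map_pow, FreeGroup.lift_apply_of, gT]
  -- from rel3, t = x₂ x₄²; from rel1, x₂ x₄³ x₂ = 1, so x₂² x₄³ is conjugate to it:
  have ht : (of t : PresentedGroup relsMW) = of x₂ * of x₄ ^ 2 := by
    have := relMW3; group at this ⊢
    exact (eq_of_div_eq_one (by simpa [div_eq_mul_inv] using this)).symm
  have h1 : (of x₂ : PresentedGroup relsMW) * of x₄ ^ 3 * of x₂ = 1 := by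
    have := relMW1; rw [ht] at this; group at this ⊢; exact this
  calc (of x₂ : PresentedGroup relsMW) ^ 2 * of x₄ ^ 3
      = of x₂ * (of x₂ * of x₄ ^ 3 * of x₂) * (of x₂)⁻¹ := by rw [sq]; group
    _ = 1 := by rw [h1]; group

def φ : PresentedGroup relsMW →* PresentedGroup relsT := PresentedGroup.toGroup hfMW
def ψ : PresentedGroup relsT →* PresentedGroup relsMW := PresentedGroup.toGroup hgT

lemma ht_MW : (of t : PresentedGroup relsMW) = (of x₂)⁻¹ * (of x₄)⁻¹ := by
  have h := relMW1
  calc (of t : PresentedGroup relsMW)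
      = (of t * of x₄ * of x₂) * (of x₂)⁻¹ * (of x₄)⁻¹ := by group
    _ = (of x₂)⁻¹ * (of x₄)⁻¹ := by rw [h]; group

lemma hs_MW : (of s : PresentedGroup relsMW)
    = (of x₂)⁻¹ * of t * (of x₄)⁻¹ * (of x₂)⁻¹ * (of t)⁻¹ := by
  have h := relMW2
  have : (of s : PresentedGroup relsMW)
      = (of x₂ * of x₄ * (of t)⁻¹ * of x₂)⁻¹ *
        (of x₂ * of x₄ * (of t)⁻¹ * of x₂ * of s * of t) * (of t)⁻¹ := by group
  rw [this, h]; group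

lemma comp1 : ψ.comp φ = MonoidHom.id _ := by
  ext g
  cases g <;>
    simp only [MonoidHom.comp_apply, MonoidHom.id_apply, φ, ψ, PresentedGroup.toGroup.of,
      fMW, map_mul, map_inv, PresentedGroup.toGroup.of, gT]
  · rw [hs_MW, ht_MW]
  · rw [ht_MW]

lemma comp2 : φ.comp ψ = MonoidHom.id _ := by
  ext g
  cases g <;>
    simp [φ, ψ, gT, fMW]

end Aux

/-- The group `⟨x₂, x₄, s, t ∣ tx₄x₂ = 1, x₂x₄t⁻¹x₂st = 1, x₂x₄²t⁻¹ = 1⟩` is isomorphic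
to `⟨a, b ∣ a²b³ = 1⟩` via an isomorphism sending `x₂ ↦ a` and `x₄ ↦ b`. -/
theorem M_W_group_iso_a2b3_group :
    ∃ e : PresentedGroup relsMW ≃* PresentedGroup relsT,
      e (PresentedGroup.of GenMW.x₂) = PresentedGroup.of GenT.a ∧
      e (PresentedGroup.of GenMW.x₄) = PresentedGroup.of GenT.b := by
  refine ⟨MonoidHom.toMulEquiv φ ψ comp1 comp2, ?_, ?_⟩ <;>
    simp [MonoidHom.toMulEquiv, φ, fMW]
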